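/- Let c ≥ 1, β > 0, and consider φ(δ) = sup_{p ≥ c} δ^{1/p} · p^{−β} for δ ∈ (0, e^{−1}). Then as δ → 0+, φ(δ) ∼ β^{β} e^{−β} |log δ|^{−β} up to the stated constant: φ(δ) ∼ (β/e)^{β} |log δ|^{−β}, with the supremum attained asymptotically at p = |log δ|/β. -/

import Mathlib

open Filter

private lemma aux_g_le (β : ℝ) (hβ : 0 < β) {L p : ℝ} (hL : 0 < L) (hp : 0 < p) :
    -(L / p) - β * Real.log p ≤ β * Real.log β - β - β * Real.log L := by
  have h0 := Real.log_le_sub_one_of_pos (show 0 < L / (p * β) by positivity)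
  rw [Real.log_div hL.ne' (by positivity), Real.log_mul hp.ne' hβ.ne'] at h0
  -- h0 : log L - (log p + log β) ≤ L / (p * β) - 1
  have h1 : β * (Real.log L - (Real.log p + Real.log β)) ≤ β * (L / (p * β) - 1) :=
    mul_le_mul_of_nonneg_left h0 hβ.le
  have h2 : β * (L / (p * β)) = L / p := by field_simp
  nlinarith [h1, h2]

private lemma sup_eq (c β : ℝ) (hc : 1 ≤ c) (hβ : 0 < β) {δ : ℝ} (hδ0 : 0 < δ)
    (hδ : δ ≤ Real.exp (-(β * c))) :
    (⨆ p : Set.Ici c, δ ^ (1 / (p : ℝ)) * (p : ℝ) ^ (-β)) =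
      (β / Real.exp 1) ^ β * |Real.log δ| ^ (-β) := by
  haveI : Nonempty (Set.Ici c) := ⟨⟨c, le_refl c⟩⟩
  set L := -Real.log δ with hLdef
  have hβc : 0 < β * c := by positivity
  have hlogδ : Real.log δ ≤ -(β * c) := by
    calc Real.log δ ≤ Real.log (Real.exp (-(β * c))) := Real.log_le_log hδ0 hδ
    _ = -(β * c) := Real.log_exp _
  have hL : β * c ≤ L := by simp only [hLdef]; linarith
  have hLpos : 0 < L := lt_of_lt_of_le hβc hL
  have habs : |Real.log δ| = L := abs_of_neg (by linarith)
  have hfp : ∀ p : ℝ, 0 < p →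
      δ ^ (1 / p) * p ^ (-β) = Real.exp (-(L / p) - β * Real.log p) := by
    intro p hp
    rw [Real.rpow_def_of_pos hδ0, Real.rpow_def_of_pos hp, ← Real.exp_add]
    congr 1
    field_simp [hLdef]
    ring
  have hM : (β / Real.exp 1) ^ β * |Real.log δ| ^ (-β) =
      Real.exp (β * Real.log β - β - β * Real.log L) := by
    rw [habs, Real.rpow_def_of_pos (by positivity : (0:ℝ) < β / Real.exp 1),
      Real.rpow_def_of_pos hLpos, ← Real.exp_add,
      Real.log_div hβ.ne' (Real.exp_pos 1).ne', Real.log_exp]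
    ring_nf
  rw [hM]
  have hub : ∀ p : Set.Ici c,
      δ ^ (1 / (p : ℝ)) * (p : ℝ) ^ (-β) ≤
        Real.exp (β * Real.log β - β - β * Real.log L) := by
    rintro ⟨p, hp⟩
    have hp0 : 0 < p := lt_of_lt_of_le (by linarith : (0:ℝ) < c) hp
    rw [hfp p hp0]
    exact Real.exp_le_exp.mpr (aux_g_le β hβ hLpos hp0)
  apply le_antisymm (ciSup_le hub)
  -- value at p₀ = L / β
  have hp₀c : c ≤ L / β := (le_div_iff₀ hβ).mpr (by linarith [hL])
  have hp₀pos : 0 < L / β := by positivity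
  have hval : δ ^ (1 / (L / β)) * (L / β) ^ (-β) =
      Real.exp (β * Real.log β - β - β * Real.log L) := by
    rw [hfp _ hp₀pos]
    congr 1
    rw [Real.log_div hLpos.ne' hβ.ne']
    field_simp
    ring
  have hb : BddAbove (Set.range fun p : Set.Ici c => δ ^ (1 / (p : ℝ)) * (p : ℝ) ^ (-β)) :=
    ⟨Real.exp (β * Real.log β - β - β * Real.log L), by rintro x ⟨p, rfl⟩; exact hub p⟩
  refine le_trans (le_of_eq hval.symm) ?_
  exact le_ciSup hb (⟨L / β, hp₀c⟩ : Set.Ici c)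

/-- asymptotics of the fundamental function
`φ(δ) = sup_{p ≥ c} δ^{1/p} p^{−β} ∼ (β/e)^β |log δ|^{−β}` as `δ → 0⁺`. -/
theorem fundamental_function_asymptotics_infinite_b (c β : ℝ)
    (hc : 1 ≤ c) (hβ : 0 < β) :
    Tendsto (fun δ : ℝ =>
        (⨆ p : Set.Ici c, δ ^ (1 / (p : ℝ)) * (p : ℝ) ^ (-β)) /
          ((β / Real.exp 1) ^ β * |Real.log δ| ^ (-β)))
      (nhdsWithin 0 (Set.Ioo 0 (Real.exp (-1)))) (nhds 1) := by
  have hev : ∀ᶠ δ : ℝ in nhdsWithin 0 (Set.Ioo 0 (Real.exp (-1))),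
      (⨆ p : Set.Ici c, δ ^ (1 / (p : ℝ)) * (p : ℝ) ^ (-β)) /
          ((β / Real.exp 1) ^ β * |Real.log δ| ^ (-β)) = 1 := by
    have h1 : ∀ᶠ δ : ℝ in nhdsWithin 0 (Set.Ioo 0 (Real.exp (-1))),
        δ < Real.exp (-(β * c)) :=
      eventually_nhdsWithin_of_eventually_nhds
        (Filter.Tendsto.eventually_lt_const (Real.exp_pos _) tendsto_id)
    filter_upwards [self_mem_nhdsWithin, h1] with δ hδmem hδlt
    have hδ0 : 0 < δ := hδmem.1
    have hne : (β / Real.exp 1) ^ β * |Real.log δ| ^ (-β) ≠ 0 := by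
      have hlog : Real.log δ < -1 := by
        calc Real.log δ < Real.log (Real.exp (-1)) :=
          Real.log_lt_log hδ0 hδmem.2
        _ = -1 := Real.log_exp _
      have h1 : (0:ℝ) < |Real.log δ| := abs_pos.mpr (by linarith)
      positivity
    rw [sup_eq c β hc hβ hδ0 hδlt.le, div_self hne]
  exact Tendsto.congr' (hev.mono fun δ h => h.symm) tendsto_const_nhds
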